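/- For every natural number a ≥ 1, Σ_{z=0}^{2a} binom(2a, z)·|1/2 − z/(2a)| = (1/2)·binom(2a, a). -/

import Mathlib

open Finset

/-- **Equation (`eq:factsum0`) of Lemma `lem:factsum`**: for every natural number
`a ≥ 1`, `∑_{z=0}^{2a} binom(2a, z)·|1/2 − z/(2a)| = (1/2)·binom(2a, a)`. -/
theorem factsum0 (a : ℕ) (ha : 1 ≤ a) :
    ∑ z ∈ range (2 * a + 1), ((2 * a).choose z : ℝ) * |1 / 2 - (z : ℝ) / (2 * a)|
      = (1 / 2) * ((2 * a).choose a : ℝ) := by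
  have hapos : (0:ℝ) < a := by exact_mod_cast ha
  have hn : (0:ℝ) < 2*a := by linarith
  set h : ℕ → ℝ := fun z => z * ((2*a).choose z) / 2 with hh
  have key : ∀ z, z ≤ 2*a → h (z+1) - h z = ((a:ℝ) - z) * ((2*a).choose z) := by
    intro z hz
    have h1 := Nat.choose_succ_right_eq (2*a) z
    have h2 : (((2*a).choose (z+1) : ℝ)) * ((z:ℝ)+1)
        = ((2*a).choose z : ℝ) * (((2*a - z : ℕ)) : ℝ) := by exact_mod_cast congrArg (Nat.cast (R := ℝ)) h1
    rw [Nat.cast_sub hz] at h2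
    simp only [hh]
    push_cast at h2 ⊢
    linear_combination h2 / 2
  rw [range_eq_Ico, ← Finset.sum_Ico_consecutive _ (Nat.zero_le a) (by omega : a ≤ 2*a+1)]
  have hS1 : ∑ z ∈ Finset.Ico 0 a, ((2 * a).choose z : ℝ) * |1 / 2 - (z : ℝ) / (2 * a)|
      = (h a - h 0) / (2*a) := by
    rw [← range_eq_Ico, ← Finset.sum_range_sub h, Finset.sum_div]
    apply Finset.sum_congr rfl
    intro z hz
    rw [Finset.mem_range] at hz
    have hz2a : z ≤ 2*a := by omega
    have hzlt : (z:ℝ) < a := by exact_mod_cast hz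
    rw [key z hz2a]
    have habs : |1 / 2 - (z : ℝ) / (2 * a)| = ((a:ℝ) - z) / (2*a) := by
      rw [abs_of_nonneg]
      · field_simp
      · rw [sub_nonneg, div_le_div_iff₀ hn (by norm_num : (0:ℝ) < 2)]
        linarith
    rw [habs]; ring
  have hS2 : ∑ z ∈ Finset.Ico a (2*a+1), ((2 * a).choose z : ℝ) * |1 / 2 - (z : ℝ) / (2 * a)|
      = (h a - h (2*a+1)) / (2*a) := by
    rw [Finset.sum_Ico_eq_sum_range]
    have hcard : 2*a + 1 - a = a + 1 := by omega
    rw [hcard]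
    have : h a - h (2*a+1) = ∑ i ∈ range (a+1), (h (a+i) - h (a+(i+1))) := by
      rw [Finset.sum_range_sub' (fun i => h (a+i))]
      simp only [Nat.add_zero]
      rw [show a+(a+1) = 2*a+1 from by omega]
    rw [this, Finset.sum_div]
    apply Finset.sum_congr rfl
    intro i hi
    rw [Finset.mem_range] at hi
    have hle : a + i ≤ 2*a := by omega
    have hi' : (i:ℝ) ≤ a := by exact_mod_cast Nat.lt_succ_iff.mp hi
    have hk := key (a+i) hle
    have habs : |1 / 2 - ((a+i : ℕ) : ℝ) / (2 * a)| = (i:ℝ) / (2*a) := by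
      rw [abs_of_nonpos]
      · push_cast; field_simp; ring
      · rw [sub_nonpos, div_le_div_iff₀ (by norm_num : (0:ℝ) < 2) hn]
        push_cast; linarith
    rw [habs]
    simp only [← Nat.add_assoc]
    have : h (a+i) - h (a+i+1) = ((i:ℝ)) * ((2*a).choose (a+i)) := by
      push_cast at hk ⊢
      linarith
    rw [this]; ring
  rw [hS1, hS2]
  have h0 : h 0 = 0 := by simp [hh]
  have htop : h (2*a+1) = 0 := by
    simp only [hh]
    rw [show 2*a+1 = (2*a)+1 from rfl, Nat.choose_succ_self]
    simp
  have hha : h a = (a:ℝ) * ((2*a).choose a) / 2 := rfl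
  rw [h0, htop, hha]
  field_simp
  ring
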